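/- Let R be a commutative ring and p a prime ideal of R that is not semiregular. Then the total quotient ring T(R[x]/p[x]) of R[x]/p[x] ≅ (R/p)[x] is an integral domain; equivalently, the extension of p[x] to the total quotient ring T(R[x]) (localization of R[x] at its non-zero-divisors) is a prime ideal of T(R[x]). -/

import Mathlib

/-- An ideal `I` is semiregular if it contains a finitely generated subideal `J`
with zero annihilator. -/
def IsSemiregular {R : Type*} [CommRing R] (I : Ideal R) : Prop :=
  ∃ J : Ideal R, J.FG ∧ J ≤ I ∧ ∀ r : R, (∀ a ∈ J, a * r = 0) → r = 0

/-- If `p` is a non-semiregular prime of `R`, then the extension of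
`p[x] = p ⬝ R[x]` to the total quotient ring `T(R[x])` is a prime ideal. -/
theorem stmt_8 {R : Type*} [CommRing R] (p : Ideal R) (hp : p.IsPrime)
    (hns : ¬ IsSemiregular p) :
    (Ideal.map (algebraMap (Polynomial R) (FractionRing (Polynomial R)))
      (Ideal.map Polynomial.C p)).IsPrime := by
  apply IsLocalization.isPrime_of_isPrime_disjoint
    (nonZeroDivisors (Polynomial R)) _ _ (haveI := hp; (Ideal.isPrime_map_C_of_isPrime : (Ideal.map Polynomial.C p).IsPrime))
  rw [Set.disjoint_left]
  rintro f hf hfP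
  -- f ∈ p[x]: all coefficients in p
  rw [SetLike.mem_coe, Ideal.mem_map_C_iff] at hfP
  apply hns
  refine ⟨Ideal.span (f.coeffs : Set R), Submodule.fg_span f.coeffs.finite_toSet, ?_, ?_⟩
  · rw [Ideal.span_le]
    intro a ha
    rw [Finset.mem_coe, Polynomial.mem_coeffs_iff] at ha
    obtain ⟨n, _, rfl⟩ := ha
    exact hfP n
  · intro r hr
    have hcoeff : ∀ n, f.coeff n * r = 0 := by
      intro n
      by_cases h : f.coeff n = 0
      · simp [h]
      · exact hr _ (Ideal.subset_span (Polynomial.coeff_mem_coeffs h))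
    have : f * Polynomial.C r = 0 := by
      ext n
      simp [Polynomial.coeff_mul_C, hcoeff n]
    have := (mem_nonZeroDivisors_iff.mp hf).2 (Polynomial.C r) (by rwa [mul_comm])
    exact_mod_cast (Polynomial.C_eq_zero.mp this)
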